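/- There exists a real eigenvalue r of A (the Perron root) such that every eigenvalue μ of A with μ ≠ r satisfies Re(μ) > r; r is a simple eigenvalue of A (algebraic multiplicity one); there exists an eigenvector of A for r with all entries positive; and any two eigenvectors of A for the eigenvalue r are scalar multiples of each other. -/

import Mathlib

open Matrix Set

noncomputable section

/-- `A` is irreducible: for every nonempty proper subset `α` of the index set,
the submatrix `A[α, αᶜ]` is not the zero matrix. -/
def IsIrred {k : ℕ} (A : Matrix (Fin k) (Fin k) ℝ) : Prop :=
  ∀ α : Finset (Fin k), α.Nonempty → α ≠ Finset.univ → ∃ i ∈ α, ∃ j ∈ αᶜ, A i j ≠ 0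

/-- `A` is a Z-matrix: off-diagonal entries are nonpositive. -/
def IsZmat {k : ℕ} (A : Matrix (Fin k) (Fin k) ℝ) : Prop :=
  ∀ i j, i ≠ j → A i j ≤ 0

/-- `A` is an M-matrix: a Z-matrix all of whose eigenvalues have nonnegative real part. -/
def IsMmat {k : ℕ} (A : Matrix (Fin k) (Fin k) ℝ) : Prop :=
  IsZmat A ∧ ∀ μ ∈ spectrum ℂ (A.map (Complex.ofReal)), 0 ≤ μ.re

/-- `A` is a nonsingular M-matrix: a Z-matrix all of whose eigenvalues have positive real part. -/
def IsNonsingMmat {k : ℕ} (A : Matrix (Fin k) (Fin k) ℝ) : Prop :=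
  IsZmat A ∧ ∀ μ ∈ spectrum ℂ (A.map (Complex.ofReal)), 0 < μ.re

/-- `P_c(x) = [x] Y (V* − x)`. -/
def Pc {k : ℕ} (Y : Matrix (Fin k) (Fin k) ℝ) (Vs : Fin k → ℝ) (x : Fin k → ℝ) : Fin k → ℝ :=
  Matrix.diagonal x *ᵥ (Y *ᵥ (Vs - x))

/-- Jacobian of `P_c` at `x`: `J(x) = [Y(V* − x)] − [x] Y`. -/
def Jmat {k : ℕ} (Y : Matrix (Fin k) (Fin k) ℝ) (Vs : Fin k → ℝ) (x : Fin k → ℝ) :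
    Matrix (Fin k) (Fin k) ℝ :=
  Matrix.diagonal (Y *ᵥ (Vs - x)) - Matrix.diagonal x * Y

/-- long-term voltage stable operating points. -/
def Dset {k : ℕ} (Y : Matrix (Fin k) (Fin k) ℝ) (Vs : Fin k → ℝ) : Set (Fin k → ℝ) :=
  {x | (∀ i, 0 < x i) ∧ IsUnit (Jmat Y Vs x).det ∧ ∀ i j, (Jmat Y Vs x)⁻¹ i j < 0}

/-- feasible power demands. -/
def Fset {k : ℕ} (Y : Matrix (Fin k) (Fin k) ℝ) (Vs : Fin k → ℝ) : Set (Fin k → ℝ) :=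
  {P | ∃ x, (∀ i, 0 < x i) ∧ Pc Y Vs x = P}

/-- `h(λ) = (1/2)([λ] Y + Y [λ])`. -/
def hmat {k : ℕ} (Y : Matrix (Fin k) (Fin k) ℝ) (l : Fin k → ℝ) : Matrix (Fin k) (Fin k) ℝ :=
  (1/2 : ℝ) • (Matrix.diagonal l * Y + Y * Matrix.diagonal l)

/-- `Λ₁ = {λ ∈ Λ : λ > 0, 1ᵀλ = 1}`. -/
def Lam1 {k : ℕ} (Y : Matrix (Fin k) (Fin k) ℝ) : Set (Fin k → ℝ) :=
  {l | (hmat Y l).PosDef ∧ (∀ i, 0 < l i) ∧ ∑ i, l i = 1}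

/-- `φ(λ) = (1/2) h(λ)⁻¹ [λ] I*` where `I* = Y V*`. -/
def phiv {k : ℕ} (Y : Matrix (Fin k) (Fin k) ℝ) (Vs : Fin k → ℝ) (l : Fin k → ℝ) : Fin k → ℝ :=
  (1/2 : ℝ) • ((hmat Y l)⁻¹ *ᵥ (Matrix.diagonal l *ᵥ (Y *ᵥ Vs)))

/-- `‖x‖_{h(λ)}²  = xᵀ h(λ) x`. -/
def qnorm {k : ℕ} (Y : Matrix (Fin k) (Fin k) ℝ) (l x : Fin k → ℝ) : ℝ :=
  x ⬝ᵥ (hmat Y l *ᵥ x)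

/-- The half-space `H_λ`. -/
def Hset {k : ℕ} (Y : Matrix (Fin k) (Fin k) ℝ) (Vs : Fin k → ℝ) (l : Fin k → ℝ) :
    Set (Fin k → ℝ) :=
  {y | l ⬝ᵥ y ≤ qnorm Y l (phiv Y Vs l)}



namespace PFaux

open Filter Topology Polynomial

variable {n : ℕ}


variable {n : ℕ}

/-- irreducibility phrased for the nonnegative matrix `B`. -/
def IrredB (B : Matrix (Fin n) (Fin n) ℝ) : Prop :=
  ∀ α : Finset (Fin n), α.Nonempty → α ≠ Finset.univ → ∃ i ∈ α, ∃ j ∈ αᶜ, B i j ≠ 0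

lemma mul_nonneg_mat {B C : Matrix (Fin n) (Fin n) ℝ} (hB : ∀ i j, 0 ≤ B i j)
    (hC : ∀ i j, 0 ≤ C i j) : ∀ i j, 0 ≤ (B * C) i j := by
  intro i j
  rw [Matrix.mul_apply]
  exact Finset.sum_nonneg fun k _ => mul_nonneg (hB i k) (hC k j)

lemma pow_nonneg_mat {B : Matrix (Fin n) (Fin n) ℝ} (hB : ∀ i j, 0 ≤ B i j) (m : ℕ) :
    ∀ i j, 0 ≤ (B ^ m) i j := by
  induction m with
  | zero => intro i j; simp [Matrix.one_apply]; split <;> norm_num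
  | succ m ih =>
    rw [pow_succ]
    exact mul_nonneg_mat ih hB

lemma onePlus_nonneg {B : Matrix (Fin n) (Fin n) ℝ} (hB : ∀ i j, 0 ≤ B i j) :
    ∀ i j, 0 ≤ (1 + B) i j := by
  intro i j
  by_cases h : i = j
  · subst h
    have := hB i i
    simp only [Matrix.add_apply, Matrix.one_apply_eq]
    linarith
  · simp [Matrix.add_apply, Matrix.one_apply, h, hB i j]

/-- entry (i,j) of `(1+B)^(m+1)` is at least `(1+B)^m i k * (1+B) k j` -/
lemma pow_succ_entry_ge {B : Matrix (Fin n) (Fin n) ℝ} (hB : ∀ i j, 0 ≤ B i j)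
    (m : ℕ) (i k j : Fin n) :
    ((1 + B) ^ m) i k * (1 + B) k j ≤ ((1 + B) ^ (m + 1)) i j := by
  rw [pow_succ, Matrix.mul_apply]
  have h1 := onePlus_nonneg hB
  have h2 := pow_nonneg_mat h1 m
  exact Finset.single_le_sum (f := fun k => ((1 + B) ^ m) i k * (1 + B) k j)
    (fun k _ => mul_nonneg (h2 i k) (h1 k j)) (Finset.mem_univ k)

lemma onePlus_diag_pos {B : Matrix (Fin n) (Fin n) ℝ} (hB : ∀ i j, 0 ≤ B i j) (k : Fin n) :
    (1 : ℝ) ≤ (1 + B) k k := by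
  have := hB k k
  simp [Matrix.add_apply, Matrix.one_apply]
  linarith

/-- the support of row i of (1+B)^m -/
noncomputable def supp (B : Matrix (Fin n) (Fin n) ℝ) (m : ℕ) (i : Fin n) : Finset (Fin n) :=
  Finset.univ.filter fun j => 0 < ((1 + B) ^ m) i j

lemma mem_supp {B : Matrix (Fin n) (Fin n) ℝ} {m : ℕ} {i j : Fin n} :
    j ∈ supp B m i ↔ 0 < ((1 + B) ^ m) i j := by
  simp [supp]

lemma self_mem_supp {B : Matrix (Fin n) (Fin n) ℝ} (hB : ∀ i j, 0 ≤ B i j) (m : ℕ) (i : Fin n) :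
    i ∈ supp B m i := by
  rw [mem_supp]
  induction m with
  | zero => simp [Matrix.one_apply]
  | succ m ih =>
    calc (0:ℝ) < ((1 + B) ^ m) i i * (1 + B) i i :=
          mul_pos ih (lt_of_lt_of_le one_pos (onePlus_diag_pos hB i))
      _ ≤ _ := pow_succ_entry_ge hB m i i i

lemma supp_mono {B : Matrix (Fin n) (Fin n) ℝ} (hB : ∀ i j, 0 ≤ B i j) (m : ℕ) (i : Fin n) :
    supp B m i ⊆ supp B (m + 1) i := by
  intro j hj
  rw [mem_supp] at hj ⊢
  calc (0:ℝ) < ((1 + B) ^ m) i j * (1 + B) j j :=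
        mul_pos hj (lt_of_lt_of_le one_pos (onePlus_diag_pos hB j))
    _ ≤ _ := pow_succ_entry_ge hB m i j j

lemma supp_grow {B : Matrix (Fin n) (Fin n) ℝ} (hB : ∀ i j, 0 ≤ B i j) (hirr : IrredB B)
    (m : ℕ) (i : Fin n) (h : supp B m i ≠ Finset.univ) :
    supp B m i ⊂ supp B (m + 1) i := by
  obtain ⟨a, ha, b, hb, hab⟩ := hirr (supp B m i) ⟨i, self_mem_supp hB m i⟩ h
  rw [Finset.mem_compl] at hb
  refine (Finset.ssubset_iff_of_subset (supp_mono hB m i)).2 ⟨b, ?_, hb⟩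
  rw [mem_supp]
  have hba : a ≠ b := by rintro rfl; exact hb ha
  have h1 : 0 < (1 + B) a b := by
    have h2 : (1 + B) a b = B a b := by simp [Matrix.add_apply, Matrix.one_apply, hba]
    rw [h2]
    exact lt_of_le_of_ne (hB a b) (Ne.symm hab)
  calc (0:ℝ) < ((1 + B) ^ m) i a * (1 + B) a b := mul_pos (mem_supp.1 ha) h1
    _ ≤ _ := pow_succ_entry_ge hB m i a b

lemma supp_card {B : Matrix (Fin n) (Fin n) ℝ} (hB : ∀ i j, 0 ≤ B i j) (hirr : IrredB B)
    (m : ℕ) (i : Fin n) : min n (m + 1) ≤ (supp B m i).card := by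
  induction m with
  | zero =>
    have : 0 < (supp B 0 i).card := Finset.card_pos.2 ⟨i, self_mem_supp hB 0 i⟩
    omega
  | succ m ih =>
    by_cases h : supp B m i = Finset.univ
    · have : supp B (m+1) i = Finset.univ :=
        Finset.Subset.antisymm (Finset.subset_univ _) (h ▸ supp_mono hB m i)
      rw [this]
      simp [Finset.card_univ]
    · have h1 := Finset.card_lt_card (supp_grow hB hirr m i h)
      have h2 : (supp B m i).card < n := by
        have := Finset.card_le_univ (supp B m i)
        simp only [Finset.card_univ, Fintype.card_fin] at this
        rcases lt_or_eq_of_le this with h3 | h3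
        · exact h3
        · exact absurd ((Finset.card_eq_iff_eq_univ _).1 (by simpa using h3)) h
      omega

lemma onePlus_pow_pos {B : Matrix (Fin n) (Fin n) ℝ} (hB : ∀ i j, 0 ≤ B i j)
    (hirr : IrredB B) (hn : 0 < n) : ∀ i j, 0 < ((1 + B) ^ (n - 1)) i j := by
  intro i j
  have h1 := supp_card hB hirr (n - 1) i
  have h2 : min n (n - 1 + 1) = n := by omega
  rw [h2] at h1
  have h3 : supp B (n-1) i = Finset.univ := by
    apply (Finset.card_eq_iff_eq_univ _).1
    have := Finset.card_le_univ (supp B (n-1) i)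
    simp only [Finset.card_univ, Fintype.card_fin] at this ⊢
    omega
  exact mem_supp.1 (h3 ▸ Finset.mem_univ j)


attribute [local instance] Matrix.linftyOpNormedRing Matrix.linftyOpNormedAlgebra
  Matrix.linftyOpNormedSpace

variable {n : ℕ}

noncomputable instance : CompleteSpace (Matrix (Fin n) (Fin n) ℂ) :=
  FiniteDimensional.complete ℂ _

lemma map_pow_ofReal (B : Matrix (Fin n) (Fin n) ℝ) (k : ℕ) :
    (B.map Complex.ofReal) ^ k = (B ^ k).map Complex.ofReal := by
  have : ∀ M : Matrix (Fin n) (Fin n) ℝ, M.map Complex.ofReal =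
      (Complex.ofRealHom.mapMatrix : Matrix (Fin n) (Fin n) ℝ →+* _) M := fun _ => rfl
  rw [this, this, ← map_pow]

lemma mulVec_mono {B : Matrix (Fin n) (Fin n) ℝ} (hB : ∀ i j, 0 ≤ B i j)
    {u v : Fin n → ℝ} (huv : ∀ j, u j ≤ v j) (i : Fin n) :
    (B *ᵥ u) i ≤ (B *ᵥ v) i := by
  simp only [Matrix.mulVec, dotProduct]
  exact Finset.sum_le_sum fun j _ => mul_le_mul_of_nonneg_left (huv j) (hB i j)

lemma pow_mulVec_lower {B : Matrix (Fin n) (Fin n) ℝ} (hB : ∀ i j, 0 ≤ B i j)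
    {s : ℝ} (hs : 0 ≤ s) {w : Fin n → ℝ}
    (h : ∀ i, s * w i ≤ (B *ᵥ w) i) (hw : ∀ i, 0 ≤ w i) :
    ∀ k i, s ^ k * w i ≤ ((B ^ k) *ᵥ w) i := by
  intro k
  induction k with
  | zero => intro i; simp [Matrix.one_mulVec]
  | succ k ih =>
    intro i
    have h1 : (B ^ (k+1)) *ᵥ w = B *ᵥ ((B ^ k) *ᵥ w) := by
      rw [Matrix.mulVec_mulVec, ← pow_succ']
    rw [h1]
    have h2 : ∀ j, s ^ k * w j ≤ ((B ^ k) *ᵥ w) j := ih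
    have h3 : (B *ᵥ fun j => s ^ k * w j) i ≤ (B *ᵥ ((B ^ k) *ᵥ w)) i :=
      mulVec_mono hB h2 i
    have h4 : (B *ᵥ fun j => s ^ k * w j) i = s ^ k * (B *ᵥ w) i := by
      simp only [Matrix.mulVec, dotProduct, Finset.mul_sum]
      exact Finset.sum_congr rfl fun j _ => by ring
    have h5 : s ^ (k+1) * w i ≤ s ^ k * (B *ᵥ w) i := by
      have := mul_le_mul_of_nonneg_left (h i) (pow_nonneg hs k)
      calc s ^ (k+1) * w i = s ^ k * (s * w i) := by ring
        _ ≤ s ^ k * (B *ᵥ w) i := this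
    exact le_trans h5 (le_trans (le_of_eq h4.symm) h3)

lemma gelfand_bound (hn : 0 < n) (B : Matrix (Fin n) (Fin n) ℝ) (hB : ∀ i j, 0 ≤ B i j)
    {s : ℝ} (hs : 0 ≤ s) {w : Fin n → ℝ} (hw : ∀ i, 0 < w i)
    (h : ∀ i, s * w i ≤ (B *ᵥ w) i) :
    ENNReal.ofReal s ≤ spectralRadius ℂ (B.map Complex.ofReal) := by
  rcases eq_or_lt_of_le hs with rfl | hs'
  · simp
  set Bc := B.map Complex.ofReal with hBc
  have hwpos : ∀ i, 0 ≤ w i := fun i => (hw i).le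
  have hk := pow_mulVec_lower hB hs h hwpos
  haveI : Nonempty (Fin n) := ⟨⟨0, hn⟩⟩
  set i0 : Fin n := ⟨0, hn⟩
  set wmax : ℝ := Finset.univ.sup' Finset.univ_nonempty w with hwmaxdef
  have hwle : ∀ j, w j ≤ wmax := fun j => Finset.le_sup' w (Finset.mem_univ j)
  have hwmax : 0 < wmax := lt_of_lt_of_le (hw i0) (hwle i0)
  set c : ℝ := w i0 / wmax with hcdef
  have hc : 0 < c := div_pos (hw i0) hwmax
  have hnorm : ∀ k, s ^ k * c ≤ ‖Bc ^ k‖ := by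
    intro k
    have h1 : s ^ k * w i0 ≤ ((B ^ k) *ᵥ w) i0 := hk k i0
    have hBk := pow_nonneg_mat hB k
    have h2 : ((B ^ k) *ᵥ w) i0 ≤ (∑ j, (B ^ k) i0 j) * wmax := by
      simp only [Matrix.mulVec, dotProduct, Finset.sum_mul]
      exact Finset.sum_le_sum fun j _ =>
        mul_le_mul_of_nonneg_left (hwle j) (hBk i0 j)
    have h3 : (∑ j, (B ^ k) i0 j) ≤ ‖Bc ^ k‖ := by
      rw [map_pow_ofReal]
      rw [Matrix.linfty_opNorm_def]
      have he : ∀ j, ((B ^ k) i0 j : ℝ) = ‖((B ^ k).map Complex.ofReal) i0 j‖ := by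
        intro j
        simp only [Matrix.map_apply, Complex.norm_real]
        rw [Real.norm_of_nonneg (hBk i0 j)]
      calc (∑ j, (B ^ k) i0 j)
          = ((∑ j, ‖((B ^ k).map Complex.ofReal) i0 j‖₊ : NNReal) : ℝ) := by
            rw [NNReal.coe_sum]
            exact Finset.sum_congr rfl fun j _ => by rw [coe_nnnorm]; exact he j
        _ ≤ _ := by
            exact_mod_cast NNReal.coe_le_coe.2
              (Finset.le_sup (f := fun i => ∑ j, ‖((B ^ k).map Complex.ofReal) i j‖₊)
                (Finset.mem_univ i0))
    have h12 : s ^ k * w i0 ≤ (∑ j, (B ^ k) i0 j) * wmax := le_trans h1 h2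
    have h4 : s ^ k * c ≤ ∑ j, (B ^ k) i0 j := by
      rw [hcdef, ← mul_div_assoc, div_le_iff₀ hwmax]
      exact h12
    exact le_trans h4 h3
  have hgel := spectrum.pow_norm_pow_one_div_tendsto_nhds_spectralRadius Bc
  have h2 : Tendsto (fun k : ℕ => c ^ (1/(k:ℝ))) atTop (𝓝 1) := by
    have h1 : Tendsto (fun k : ℕ => Real.log c * (1/(k:ℝ))) atTop (𝓝 0) := by
      simpa using (tendsto_one_div_atTop_nhds_zero_nat).const_mul (Real.log c)
    have h4 : Tendsto (fun k : ℕ => Real.exp (Real.log c * (1/(k:ℝ)))) atTop (𝓝 1) := by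
      simpa [Function.comp_def] using (Real.continuous_exp.tendsto 0).comp h1
    refine h4.congr fun k => ?_
    rw [← Real.rpow_def_of_pos hc]
  have hlim : Tendsto (fun k : ℕ => ENNReal.ofReal (s * c ^ (1/(k:ℝ)))) atTop
      (𝓝 (ENNReal.ofReal s)) := by
    have h5 : Tendsto (fun k : ℕ => s * c ^ (1/(k:ℝ))) atTop (𝓝 s) := by
      simpa using tendsto_const_nhds.mul h2
    exact (ENNReal.continuous_ofReal.tendsto s).comp h5
  refine le_of_tendsto_of_tendsto hlim hgel ?_
  filter_upwards [eventually_ge_atTop 1] with k hk1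
  apply ENNReal.ofReal_le_ofReal
  have hkr : ((k:ℝ)) ≠ 0 := Nat.cast_ne_zero.2 (by omega)
  have heq : s * c ^ (1/(k:ℝ)) = (s ^ k * c) ^ (1/(k:ℝ)) := by
    rw [Real.mul_rpow (by positivity) hc.le]
    congr 1
    rw [← Real.rpow_natCast s k, ← Real.rpow_mul hs]
    rw [mul_one_div, div_self hkr, Real.rpow_one]
  rw [heq]
  exact Real.rpow_le_rpow (by positivity) (hnorm k) (by positivity)


lemma mulVec_pos {C : Matrix (Fin n) (Fin n) ℝ} (hC : ∀ i j, 0 < C i j)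
    {u : Fin n → ℝ} (hu0 : ∀ i, 0 ≤ u i) (hune : u ≠ 0) : ∀ i, 0 < (C *ᵥ u) i := by
  intro i
  obtain ⟨j0, hj0⟩ : ∃ j0, u j0 ≠ 0 := Function.ne_iff.1 hune
  have hj0' : 0 < u j0 := lt_of_le_of_ne (hu0 j0) (Ne.symm hj0)
  have : 0 < C i j0 * u j0 := mul_pos (hC i j0) hj0'
  calc (0:ℝ) < C i j0 * u j0 := this
    _ ≤ ∑ j, C i j * u j := Finset.single_le_sum
        (f := fun j => C i j * u j) (fun j _ => mul_nonneg (hC i j).le (hu0 j))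
        (Finset.mem_univ j0)
    _ = (C *ᵥ u) i := rfl

lemma pow_mulVec_eig {B : Matrix (Fin n) (Fin n) ℝ} {ρ : ℝ} {u : Fin n → ℝ}
    (h : B *ᵥ u = ρ • u) (m : ℕ) : ((1 + B) ^ m) *ᵥ u = ((1 + ρ) ^ m) • u := by
  induction m with
  | zero => simp [Matrix.one_mulVec]
  | succ m ih =>
    rw [pow_succ', ← Matrix.mulVec_mulVec, ih, Matrix.mulVec_smul, Matrix.add_mulVec,
      Matrix.one_mulVec, h]
    ext i
    simp [Pi.smul_apply]
    ring

/-- the key "no slack" lemma. -/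
lemma slack {B : Matrix (Fin n) (Fin n) ℝ} (hn : 0 < n) (hB : ∀ i j, 0 ≤ B i j)
    (hirr : IrredB B) {ρ : ℝ} (hρ0 : 0 ≤ ρ)
    (hmax : ∀ s : ℝ, 0 ≤ s → (∃ w : Fin n → ℝ, (∀ i, 0 < w i) ∧ ∀ i, s * w i ≤ (B *ᵥ w) i) →
      s ≤ ρ)
    {u : Fin n → ℝ} (hu0 : ∀ i, 0 ≤ u i) (hune : u ≠ 0)
    (hsub : ∀ i, ρ * u i ≤ (B *ᵥ u) i) :
    B *ᵥ u = ρ • u ∧ ∀ i, 0 < u i := by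
  haveI : Nonempty (Fin n) := ⟨⟨0, hn⟩⟩
  set C := (1 + B) ^ (n - 1) with hCdef
  have hC : ∀ i j, 0 < C i j := onePlus_pow_pos hB hirr hn
  have hcomm : B * C = C * B := by
    have h1 : Commute B ((1 + B) ^ (n-1)) :=
      (((Commute.one_right B).add_right (Commute.refl B)).pow_right _)
    exact h1
  have heig : B *ᵥ u = ρ • u := by
    by_contra hd
    set d := B *ᵥ u - ρ • u with hddef
    have hd0 : ∀ i, 0 ≤ d i := by
      intro i
      simp only [hddef, Pi.sub_apply, Pi.smul_apply, smul_eq_mul, sub_nonneg]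
      exact hsub i
    have hdne : d ≠ 0 := fun hh => hd (by rwa [hddef, sub_eq_zero] at hh)
    set w := C *ᵥ u with hwdef
    have hw : ∀ i, 0 < w i := mulVec_pos hC hu0 hune
    have hCd : ∀ i, 0 < (C *ᵥ d) i := mulVec_pos hC hd0 hdne
    have hBw : B *ᵥ w = ρ • w + C *ᵥ d := by
      rw [hwdef, Matrix.mulVec_mulVec, hcomm, ← Matrix.mulVec_mulVec]
      have : B *ᵥ u = ρ • u + d := by rw [hddef]; ring_nf
      rw [this, Matrix.mulVec_add, Matrix.mulVec_smul]
    set ε := Finset.univ.inf' Finset.univ_nonempty (fun i => (C *ᵥ d) i / w i) with hedef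
    have hε : 0 < ε := by
      rw [hedef]
      rw [Finset.lt_inf'_iff]
      exact fun i _ => div_pos (hCd i) (hw i)
    have hcon : ρ + ε ≤ ρ := by
      apply hmax _ (by linarith)
      refine ⟨w, hw, fun i => ?_⟩
      have h1 : ε ≤ (C *ᵥ d) i / w i := Finset.inf'_le _ (Finset.mem_univ i)
      have h2 : ε * w i ≤ (C *ᵥ d) i := by
        rw [← div_mul_cancel₀ ((C *ᵥ d) i) (ne_of_gt (hw i))]
        exact mul_le_mul_of_nonneg_right h1 (hw i).le
      have h3 : (B *ᵥ w) i = ρ * w i + (C *ᵥ d) i := by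
        rw [hBw]; simp [Pi.add_apply, Pi.smul_apply]
      rw [h3]
      nlinarith [hw i]
    linarith
  refine ⟨heig, fun i => ?_⟩
  have h1 : C *ᵥ u = ((1 + ρ) ^ (n - 1)) • u := pow_mulVec_eig heig (n - 1)
  have h2 : 0 < (C *ᵥ u) i := mulVec_pos hC hu0 hune i
  rw [h1] at h2
  simp only [Pi.smul_apply, smul_eq_mul] at h2
  have h3 : (0:ℝ) < (1 + ρ) ^ (n - 1) := pow_pos (by linarith) _
  nlinarith


lemma mem_spectrum_iff_eigen (M : Matrix (Fin n) (Fin n) ℂ) (μ : ℂ) :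
    μ ∈ spectrum ℂ M ↔ ∃ z : Fin n → ℂ, z ≠ 0 ∧ M *ᵥ z = μ • z := by
  rw [spectrum.mem_iff]
  have h1 : (algebraMap ℂ (Matrix (Fin n) (Fin n) ℂ)) μ - M = μ • (1 : Matrix (Fin n) (Fin n) ℂ) - M := by
    rw [Algebra.algebraMap_eq_smul_one]
  rw [h1, Matrix.isUnit_iff_isUnit_det, isUnit_iff_ne_zero, not_ne_iff,
    ← Matrix.exists_mulVec_eq_zero_iff]
  constructor
  · rintro ⟨v, hv, hv2⟩
    refine ⟨v, hv, ?_⟩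
    rw [Matrix.sub_mulVec, Matrix.smul_mulVec, Matrix.one_mulVec, sub_eq_zero] at hv2
    exact hv2.symm
  · rintro ⟨v, hv, hv2⟩
    refine ⟨v, hv, ?_⟩
    rw [Matrix.sub_mulVec, Matrix.smul_mulVec, Matrix.one_mulVec, sub_eq_zero, hv2]

lemma spectrum_transpose (M : Matrix (Fin n) (Fin n) ℂ) :
    spectrum ℂ Mᵀ = spectrum ℂ M := by
  ext μ
  rw [spectrum.mem_iff, spectrum.mem_iff]
  have h1 : (algebraMap ℂ (Matrix (Fin n) (Fin n) ℂ)) μ - Mᵀ =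
      ((algebraMap ℂ (Matrix (Fin n) (Fin n) ℂ)) μ - M)ᵀ := by
    rw [Matrix.transpose_sub]
    congr 1
    rw [Algebra.algebraMap_eq_smul_one (A := Matrix (Fin n) (Fin n) ℂ), Matrix.transpose_smul,
      Matrix.transpose_one]
  rw [h1, Matrix.isUnit_iff_isUnit_det, Matrix.isUnit_iff_isUnit_det, Matrix.det_transpose]


theorem perron_B (hn : 0 < n) (B : Matrix (Fin n) (Fin n) ℝ) (hB : ∀ i j, 0 ≤ B i j)
    (hirr : IrredB B) :
    ∃ ρ : ℝ, 0 ≤ ρ ∧ (ρ : ℂ) ∈ spectrum ℂ (B.map Complex.ofReal) ∧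
      (∀ μ ∈ spectrum ℂ (B.map Complex.ofReal), ‖μ‖ ≤ ρ) ∧
      ∃ u : Fin n → ℝ, (∀ i, 0 < u i) ∧ B *ᵥ u = ρ • u ∧
        (∀ v : Fin n → ℝ, B *ᵥ v = ρ • v → ∃ c : ℝ, v = c • u) := by
  haveI : Nonempty (Fin n) := ⟨⟨0, hn⟩⟩
  set Bc := B.map Complex.ofReal with hBcdef
  have hne : (spectrum ℂ Bc).Nonempty := spectrum.nonempty Bc
  obtain ⟨μmax, hμmem, hμeq⟩ := spectrum.exists_nnnorm_eq_spectralRadius_of_nonempty hne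
  set ρ : ℝ := ‖μmax‖ with hρdef
  have hρ0 : 0 ≤ ρ := norm_nonneg _
  -- all eigenvalues bounded by ρ
  have hle : ∀ μ ∈ spectrum ℂ Bc, ‖μ‖ ≤ ρ := by
    intro μ hμ
    have h1 : (‖μ‖₊ : ENNReal) ≤ spectralRadius ℂ Bc := le_iSup₂ (f := fun k _ => (‖k‖₊ : ENNReal)) μ hμ
    rw [← hμeq] at h1
    have h2 : ‖μ‖₊ ≤ ‖μmax‖₊ := by exact_mod_cast h1
    exact_mod_cast h2
  -- the "hmax" hypothesis for slack
  have hmax : ∀ s : ℝ, 0 ≤ s →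
      (∃ w : Fin n → ℝ, (∀ i, 0 < w i) ∧ ∀ i, s * w i ≤ (B *ᵥ w) i) → s ≤ ρ := by
    rintro s hs ⟨w, hw, hsw⟩
    have h1 := gelfand_bound hn B hB hs hw hsw
    rw [← hμeq] at h1
    have h2 : ENNReal.ofReal s ≤ (‖μmax‖₊ : ENNReal) := h1
    have h3 : s ≤ ((‖μmax‖₊ : NNReal) : ℝ) := by
      have h4 := ENNReal.toReal_mono (by simp) h2
      rwa [ENNReal.toReal_ofReal hs, ENNReal.coe_toReal] at h4
    simpa using h3
  -- eigenvector for μmax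
  obtain ⟨z, hzne, hz⟩ := (mem_spectrum_iff_eigen Bc μmax).1 hμmem
  set u : Fin n → ℝ := fun i => ‖z i‖ with hudef
  have hu0 : ∀ i, 0 ≤ u i := fun i => norm_nonneg _
  have hune : u ≠ 0 := by
    intro hu
    apply hzne
    funext i
    have : u i = 0 := congrFun hu i
    rw [hudef] at this
    simpa using this
  have hsub : ∀ i, ρ * u i ≤ (B *ᵥ u) i := by
    intro i
    have h1 : ρ * u i = ‖(Bc *ᵥ z) i‖ := by
      rw [hz]
      simp only [Pi.smul_apply, smul_eq_mul, hudef, hρdef]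
      exact (norm_mul _ _).symm
    rw [h1]
    calc ‖(Bc *ᵥ z) i‖ = ‖∑ j, Bc i j * z j‖ := rfl
      _ ≤ ∑ j, ‖Bc i j * z j‖ := by
          exact norm_sum_le _ _
      _ = ∑ j, B i j * u j := by
          refine Finset.sum_congr rfl fun j _ => ?_
          rw [norm_mul, hBcdef]
          simp only [Matrix.map_apply, Complex.norm_real, hudef]
          rw [Real.norm_of_nonneg (hB i j)]
      _ = (B *ᵥ u) i := rfl
  obtain ⟨heig, hupos⟩ := slack hn hB hirr hρ0 hmax hu0 hune hsub
  -- ρ is an eigenvalue of Bc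
  have hρmem : (ρ : ℂ) ∈ spectrum ℂ Bc := by
    rw [mem_spectrum_iff_eigen]
    refine ⟨fun i => (u i : ℂ), ?_, ?_⟩
    · intro hc
      apply hune
      funext i
      have := congrFun hc i
      simpa using this
    · funext i
      have h1 := congrFun heig i
      simp only [Pi.smul_apply, smul_eq_mul] at h1 ⊢
      rw [hBcdef]
      calc ∑ j, (B.map Complex.ofReal) i j * (u j : ℂ) = ∑ j, ((B i j * u j : ℝ) : ℂ) := by
            refine Finset.sum_congr rfl fun j _ => ?_
            simp [Matrix.map_apply]
        _ = (((B *ᵥ u) i : ℝ) : ℂ) := by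
            push_cast [Matrix.mulVec, dotProduct]
            rfl
        _ = ((ρ * u i : ℝ) : ℂ) := by rw [h1]
        _ = (ρ : ℂ) * (u i : ℂ) := by push_cast; rfl
  -- uniqueness
  refine ⟨ρ, hρ0, hρmem, hle, u, hupos, heig, ?_⟩
  intro v hv
  by_cases hvz : v = 0
  · exact ⟨0, by simp [hvz]⟩
  · have ha0 : ∀ i, 0 ≤ |v i| := fun i => abs_nonneg _
    have hane : (fun i => |v i|) ≠ 0 := by
      intro hc
      apply hvz
      funext i
      have := congrFun hc i
      simpa using this
    have hasub : ∀ i, ρ * |v i| ≤ (B *ᵥ fun j => |v j|) i := by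
      intro i
      have h1 : ρ * |v i| = |(B *ᵥ v) i| := by
        rw [hv]
        simp only [Pi.smul_apply, smul_eq_mul, abs_mul, abs_of_nonneg hρ0]
      rw [h1]
      calc |(B *ᵥ v) i| = |∑ j, B i j * v j| := rfl
        _ ≤ ∑ j, |B i j * v j| := Finset.abs_sum_le_sum_abs _ _
        _ = ∑ j, B i j * |v j| := by
            refine Finset.sum_congr rfl fun j _ => ?_
            rw [abs_mul, abs_of_nonneg (hB i j)]
        _ = (B *ᵥ fun j => |v j|) i := rfl
    obtain ⟨-, hvpos⟩ := slack hn hB hirr hρ0 hmax ha0 hane hasub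
    set i0 : Fin n := ⟨0, hn⟩
    set c : ℝ := v i0 / u i0 with hcdef
    refine ⟨c, ?_⟩
    by_contra hne2
    set y : Fin n → ℝ := v - c • u with hydef
    have hyne : y ≠ 0 := fun hc => hne2 (by rw [hydef] at hc; rwa [sub_eq_zero] at hc)
    have hyeig : B *ᵥ y = ρ • y := by
      rw [hydef, Matrix.mulVec_sub, Matrix.mulVec_smul, hv, heig]
      ext i
      simp [Pi.smul_apply, Pi.sub_apply]
      ring
    have hy0 : y i0 = 0 := by
      rw [hydef]
      simp only [Pi.sub_apply, Pi.smul_apply, smul_eq_mul, hcdef]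
      have hu0' : u i0 ≠ 0 := ne_of_gt (hupos i0)
      field_simp
      ring
    -- same argument: |y| is positive everywhere, contradiction
    have hb0 : ∀ i, 0 ≤ |y i| := fun i => abs_nonneg _
    have hbne : (fun i => |y i|) ≠ 0 := by
      intro hc
      apply hyne
      funext i
      have := congrFun hc i
      simpa using this
    have hbsub : ∀ i, ρ * |y i| ≤ (B *ᵥ fun j => |y j|) i := by
      intro i
      have h1 : ρ * |y i| = |(B *ᵥ y) i| := by
        rw [hyeig]
        simp only [Pi.smul_apply, smul_eq_mul, abs_mul, abs_of_nonneg hρ0]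
      rw [h1]
      calc |(B *ᵥ y) i| = |∑ j, B i j * y j| := rfl
        _ ≤ ∑ j, |B i j * y j| := Finset.abs_sum_le_sum_abs _ _
        _ = ∑ j, B i j * |y j| := by
            refine Finset.sum_congr rfl fun j _ => ?_
            rw [abs_mul, abs_of_nonneg (hB i j)]
        _ = (B *ᵥ fun j => |y j|) i := rfl
    obtain ⟨-, hypos⟩ := slack hn hB hirr hρ0 hmax hb0 hbne hbsub
    have := hypos i0
    rw [hy0] at this
    simp at this


lemma derivative_finset_prod (s : Finset (Fin n)) (f : Fin n → ℝ[X]) :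
    derivative (∏ i ∈ s, f i) = ∑ j ∈ s, (∏ i ∈ s.erase j, f i) * derivative (f j) := by
  classical
  induction s using Finset.induction_on with
  | empty => simp
  | @insert a s ha ih =>
    rw [Finset.prod_insert ha, derivative_mul, ih, Finset.sum_insert ha,
      Finset.erase_insert ha, Finset.mul_sum]
    congr 1
    · ring
    · refine Finset.sum_congr rfl fun j hj => ?_
      rw [Finset.erase_insert_of_ne (by rintro rfl; exact ha hj),
        Finset.prod_insert (fun h => ha (Finset.mem_of_mem_erase h))]
      ring

lemma derivative_det (M : Matrix (Fin n) (Fin n) ℝ[X]) :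
    derivative M.det =
      ∑ j, (M.updateCol j fun i => derivative (M i j)).det := by
  classical
  rw [Matrix.det_apply]
  rw [map_sum]
  have h1 : ∀ σ : Equiv.Perm (Fin n),
      derivative (Equiv.Perm.sign σ • ∏ i, M (σ i) i) =
        ∑ j, Equiv.Perm.sign σ • ((∏ i ∈ Finset.univ.erase j, M (σ i) i) * derivative (M (σ j) j)) := by
    intro σ
    rw [Units.smul_def, map_zsmul, derivative_finset_prod, Finset.smul_sum]
    exact Finset.sum_congr rfl fun j _ => by rw [Units.smul_def]
  rw [Finset.sum_congr rfl fun σ _ => h1 σ]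
  rw [Finset.sum_comm]
  refine Finset.sum_congr rfl fun j _ => ?_
  rw [Matrix.det_apply]
  refine Finset.sum_congr rfl fun σ _ => ?_
  congr 1
  have h2 : ∀ i : Fin n, (M.updateCol j fun i => derivative (M i j)) (σ i) i =
      if i = j then derivative (M (σ j) j) else M (σ i) i := by
    intro i
    rw [Matrix.updateCol_apply]
    by_cases h : i = j <;> simp [h]
  rw [Finset.prod_congr rfl fun i _ => h2 i,
    ← Finset.mul_prod_erase Finset.univ
      (fun i => if i = j then derivative (M (σ j) j) else M (σ i) i) (Finset.mem_univ j)]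
  rw [if_pos rfl, mul_comm]
  congr 1
  exact Finset.prod_congr rfl fun i hi => (if_neg (Finset.ne_of_mem_erase hi)).symm


lemma map_updateCol (M : Matrix (Fin n) (Fin n) ℝ[X]) (j : Fin n) (g : Fin n → ℝ[X])
    (f : ℝ[X] →+* ℝ) :
    (M.updateCol j g).map f = (M.map f).updateCol j (fun i => f (g i)) := by
  ext i k
  simp only [Matrix.map_apply, Matrix.updateCol_apply]
  split <;> rfl

lemma charmatrix_map_eval (A : Matrix (Fin n) (Fin n) ℝ) (r : ℝ) :
    (charmatrix A).map (evalRingHom r) = r • (1 : Matrix (Fin n) (Fin n) ℝ) - A := by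
  ext i j
  by_cases h : i = j
  · subst h
    rw [Matrix.map_apply, charmatrix_apply_eq]
    simp [Matrix.one_apply, Matrix.sub_apply]
  · rw [Matrix.map_apply, charmatrix_apply_ne _ _ _ h]
    simp [Matrix.one_apply, Matrix.sub_apply, h]

lemma eval_charpoly' (A : Matrix (Fin n) (Fin n) ℝ) (r : ℝ) :
    A.charpoly.eval r = (r • (1 : Matrix (Fin n) (Fin n) ℝ) - A).det := by
  have h1 : A.charpoly.eval r = (evalRingHom r) A.charpoly := rfl
  rw [h1, Matrix.charpoly, RingHom.map_det, ← charmatrix_map_eval A r]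
  rfl

lemma deriv_charpoly_eval (A : Matrix (Fin n) (Fin n) ℝ) (r : ℝ) :
    (derivative A.charpoly).eval r =
      ∑ j, (r • (1 : Matrix (Fin n) (Fin n) ℝ) - A).adjugate j j := by
  rw [Matrix.charpoly, derivative_det]
  rw [eval_finset_sum]
  refine Finset.sum_congr rfl fun j _ => ?_
  have h1 : ∀ p : ℝ[X], p.eval r = (evalRingHom r) p := fun _ => rfl
  rw [h1, RingHom.map_det, RingHom.mapMatrix_apply, map_updateCol, charmatrix_map_eval]
  have h2 : (fun i => (evalRingHom r) (derivative (charmatrix A i j))) = Pi.single j (1:ℝ) := by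
    funext i
    by_cases h : i = j
    · subst h
      rw [charmatrix_apply_eq]
      simp
    · rw [charmatrix_apply_ne _ _ _ h]
      simp [Pi.single_apply, h]
  rw [h2, ← Matrix.cramer_apply, Matrix.cramer_eq_adjugate_mulVec, Matrix.mulVec_single]
  simp

lemma adjugate_trace_ne_zero (hn : 0 < n) (M : Matrix (Fin n) (Fin n) ℝ)
    (u q : Fin n → ℝ) (hu : ∀ i, 0 < u i) (hq : ∀ i, 0 < q i)
    (hMu : M *ᵥ u = 0) (hMq : Mᵀ *ᵥ q = 0)
    (hker : ∀ v, M *ᵥ v = 0 → ∃ c : ℝ, v = c • u)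
    (hkerT : ∀ v, Mᵀ *ᵥ v = 0 → ∃ c : ℝ, v = c • q) :
    ∑ j, M.adjugate j j ≠ 0 := by
  haveI : Nonempty (Fin n) := ⟨⟨0, hn⟩⟩
  set i0 : Fin n := ⟨0, hn⟩
  have hune : u ≠ 0 := fun h => absurd (congrFun h i0) (by simp; exact ne_of_gt (hu i0))
  have hdet : M.det = 0 := Matrix.exists_mulVec_eq_zero_iff.1 ⟨u, hune, hMu⟩
  have hMK : M * M.adjugate = 0 := by rw [Matrix.mul_adjugate, hdet, zero_smul]
  have hKM : M.adjugate * M = 0 := by rw [Matrix.adjugate_mul, hdet, zero_smul]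
  have hqu : 0 < q ⬝ᵥ u := Finset.sum_pos (fun i _ => mul_pos (hq i) (hu i))
    Finset.univ_nonempty
  -- columns of adjugate are multiples of u
  have hcol : ∀ j, ∃ c : ℝ, (fun i => M.adjugate i j) = c • u := by
    intro j
    apply hker
    funext i
    have : (M *ᵥ fun k => M.adjugate k j) i = (M * M.adjugate) i j := by
      simp [Matrix.mulVec, dotProduct, Matrix.mul_apply]
    rw [this, hMK]
    rfl
  -- rows of adjugate are multiples of q
  have hrow : ∀ i, ∃ d : ℝ, (fun j => M.adjugate i j) = d • q := by
    intro i
    apply hkerT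
    funext j
    have : (Mᵀ *ᵥ fun k => M.adjugate i k) j = (M.adjugate * M) i j := by
      simp [Matrix.mulVec, dotProduct, Matrix.mul_apply, Matrix.transpose_apply]
      rw [Finset.sum_congr rfl fun k _ => mul_comm (M k j) (M.adjugate i k)]
    rw [this, hKM]
    rfl
  choose c hc using hcol
  choose d hd using hrow
  have hentry : ∀ i j, M.adjugate i j = c j * u i := fun i j => by
    have := congrFun (hc j) i; simpa using this
  have hentry' : ∀ i j, M.adjugate i j = d i * q j := fun i j => by
    have := congrFun (hd i) j; simpa using this
  -- det of M with column i0 replaced by u is nonzero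
  have hNdet : (M.updateCol i0 u).det ≠ 0 := by
    intro hdet0
    obtain ⟨a, hane, ha⟩ := Matrix.exists_mulVec_eq_zero_iff.2 hdet0
    have hsplit : ∀ i, ((M.updateCol i0 u) *ᵥ a) i
        = (M *ᵥ Function.update a i0 0) i + a i0 * u i := by
      intro i
      simp only [Matrix.mulVec, dotProduct, Matrix.updateCol_apply]
      rw [← Finset.add_sum_erase _ _ (Finset.mem_univ i0),
        ← Finset.add_sum_erase _ (fun j => M i j * Function.update a i0 0 j) (Finset.mem_univ i0)]
      have hrest : ∑ j ∈ Finset.univ.erase i0, (if j = i0 then u i else M i j) * a j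
          = ∑ j ∈ Finset.univ.erase i0, M i j * Function.update a i0 0 j := by
        refine Finset.sum_congr rfl fun j hj => ?_
        rw [if_neg (Finset.ne_of_mem_erase hj),
          Function.update_of_ne (Finset.ne_of_mem_erase hj)]
      rw [hrest]
      simp only [if_pos rfl, if_true, Function.update_self]
      ring
    have hai0 : a i0 = 0 := by
      have h1 : q ⬝ᵥ ((M.updateCol i0 u) *ᵥ a) = 0 := by rw [ha]; simp
      have h2 : q ⬝ᵥ ((M.updateCol i0 u) *ᵥ a)
          = q ⬝ᵥ (M *ᵥ Function.update a i0 0) + a i0 * (q ⬝ᵥ u) := by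
        simp only [dotProduct]
        rw [Finset.sum_congr rfl fun i _ => by rw [hsplit i],
          Finset.sum_congr rfl fun i (_ : i ∈ Finset.univ) =>
            (mul_add (q i) ((M *ᵥ Function.update a i0 0) i) (a i0 * u i)),
          Finset.sum_add_distrib]
        congr 1
        rw [Finset.mul_sum]
        exact Finset.sum_congr rfl fun i _ => by ring
      have h3 : q ⬝ᵥ (M *ᵥ Function.update a i0 0) = 0 := by
        rw [dotProduct_mulVec, ← Matrix.mulVec_transpose, hMq]
        exact zero_dotProduct _
      rw [h2, h3, zero_add] at h1
      exact (mul_eq_zero.1 h1).resolve_right (ne_of_gt hqu)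
    have hupdate : Function.update a i0 0 = a := by
      rw [← hai0]
      exact Function.update_eq_self i0 a
    have hMa : M *ᵥ a = 0 := by
      funext i
      have h4 := congrFun ha i
      rw [hsplit i, hai0, hupdate] at h4
      simpa using h4
    obtain ⟨cc, hcc⟩ := hker a hMa
    have h5 : a i0 = cc * u i0 := by rw [hcc]; rfl
    have h6 : cc = 0 := by
      rw [hai0] at h5
      rcases mul_eq_zero.1 h5.symm with h | h
      · exact h
      · exact absurd h (ne_of_gt (hu i0))
    apply hane
    rw [hcc, h6, zero_smul]
  have hdet2 : (M.updateCol i0 u).det = (M.adjugate *ᵥ u) i0 := by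
    rw [← Matrix.cramer_apply, Matrix.cramer_eq_adjugate_mulVec]
  have hadju : (M.adjugate *ᵥ u) i0 = d i0 * (q ⬝ᵥ u) := by
    simp only [Matrix.mulVec, dotProduct]
    rw [Finset.sum_congr rfl fun j (_ : j ∈ Finset.univ) => by rw [hentry' i0 j],
      Finset.mul_sum]
    exact Finset.sum_congr rfl fun j _ => by ring
  have hdi0 : d i0 ≠ 0 := by
    intro h0
    apply hNdet
    rw [hdet2, hadju, h0, zero_mul]
  have hdgamma : ∀ i, d i = (c i0 / q i0) * u i := by
    intro i
    have h5 : d i * q i0 = c i0 * u i := by rw [← hentry' i i0, hentry i i0]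
    rw [div_mul_eq_mul_div, eq_div_iff (ne_of_gt (hq i0))]
    linarith [h5]
  have hgam : c i0 / q i0 ≠ 0 := by
    intro h0
    apply hdi0
    rw [hdgamma i0, h0, zero_mul]
  have huq : 0 < u ⬝ᵥ q :=
    Finset.sum_pos (fun i _ => mul_pos (hu i) (hq i)) Finset.univ_nonempty
  have htr : ∑ j, M.adjugate j j = (c i0 / q i0) * (u ⬝ᵥ q) := by
    rw [dotProduct, Finset.mul_sum]
    refine Finset.sum_congr rfl fun j _ => ?_
    rw [hentry' j j, hdgamma j]
    ring
  rw [htr]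
  exact mul_ne_zero hgam (ne_of_gt huq)


lemma rootMultiplicity_eq_one {p : Polynomial ℂ} (hp : p ≠ 0) {r : ℂ}
    (h0 : p.eval r = 0) (h1 : (derivative p).eval r ≠ 0) :
    p.rootMultiplicity r = 1 := by
  have hroot : p.IsRoot r := h0
  have hpos : 0 < p.rootMultiplicity r := (Polynomial.rootMultiplicity_pos hp).2 hroot
  by_contra hne
  have h2 : 2 ≤ p.rootMultiplicity r := by omega
  have h3 := Polynomial.derivative_rootMultiplicity_of_root hroot
  have h4 : 0 < (derivative p).rootMultiplicity r := by omega
  have h5 : derivative p ≠ 0 := by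
    intro h
    rw [h] at h4
    simp [Polynomial.rootMultiplicity_zero] at h4
  exact h1 ((Polynomial.rootMultiplicity_pos h5).1 h4)

lemma shift_eq (Mc : Matrix (Fin n) (Fin n) ℂ) (t μ : ℂ) :
    (algebraMap ℂ (Matrix (Fin n) (Fin n) ℂ)) (t - μ) - (t • 1 - Mc)
      = -((algebraMap ℂ (Matrix (Fin n) (Fin n) ℂ)) μ - Mc) := by
  rw [Algebra.algebraMap_eq_smul_one, Algebra.algebraMap_eq_smul_one, sub_smul]
  abel

lemma mem_spec_shift (Mc : Matrix (Fin n) (Fin n) ℂ) (t μ : ℂ) :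
    μ ∈ spectrum ℂ Mc ↔ (t - μ) ∈ spectrum ℂ (t • 1 - Mc) := by
  rw [spectrum.mem_iff, spectrum.mem_iff, shift_eq, IsUnit.neg_iff]


lemma irredB_transpose {B : Matrix (Fin n) (Fin n) ℝ} (h : IrredB B) : IrredB Bᵀ := by
  intro α hne huniv
  have h1 : αᶜ.Nonempty := by
    rw [Finset.nonempty_iff_ne_empty]
    intro hc
    apply huniv
    rwa [Finset.compl_eq_empty_iff] at hc
  have h2 : αᶜ ≠ Finset.univ := by
    intro hc
    rw [Finset.compl_eq_univ_iff] at hc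
    exact Finset.nonempty_iff_ne_empty.1 hne hc
  obtain ⟨i, hi, j, hj, hij⟩ := h αᶜ h1 h2
  rw [compl_compl] at hj
  exact ⟨j, hj, i, by rwa [Finset.mem_compl] at hi ⊢, by simpa [Matrix.transpose_apply] using hij⟩


end PFaux

open PFaux Polynomial in
theorem stmt_6 (n : ℕ) (hn : 1 ≤ n)
    (A : Matrix (Fin n) (Fin n) ℝ)
    (hZ : IsZmat A) (hirr : IsIrred A) :
    ∃ r : ℝ,
      -- r is an eigenvalue of A
      (r : ℂ) ∈ spectrum ℂ (A.map (Complex.ofReal)) ∧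
      -- every other eigenvalue has strictly larger real part
      (∀ μ ∈ spectrum ℂ (A.map (Complex.ofReal)), μ ≠ (r : ℂ) → r < μ.re) ∧
      -- r is a simple eigenvalue (algebraic multiplicity one)
      Polynomial.rootMultiplicity (r : ℂ) (A.map (Complex.ofReal)).charpoly = 1 ∧
      -- there is a positive eigenvector for r
      (∃ v : Fin n → ℝ, (∀ i, 0 < v i) ∧ A *ᵥ v = r • v) ∧
      -- eigenvectors for r are unique up to scaling
      (∀ v w : Fin n → ℝ, v ≠ 0 → w ≠ 0 → A *ᵥ v = r • v → A *ᵥ w = r • w →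
        ∃ c : ℝ, w = c • v) := by
  have hn' : 0 < n := hn
  haveI : Nonempty (Fin n) := ⟨⟨0, hn'⟩⟩
  -- set up B = s0 • 1 - A
  set s0 : ℝ := Finset.univ.sup' Finset.univ_nonempty (fun i => A i i) with hs0def
  have hs0 : ∀ i, A i i ≤ s0 := fun i => Finset.le_sup' (f := fun i => A i i) (Finset.mem_univ i)
  set B : Matrix (Fin n) (Fin n) ℝ := s0 • (1 : Matrix (Fin n) (Fin n) ℝ) - A with hBdef
  have hBentry : ∀ i j, B i j = s0 * (if i = j then (1:ℝ) else 0) - A i j := by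
    intro i j
    rw [hBdef]
    simp [Matrix.sub_apply, Matrix.smul_apply, Matrix.one_apply]
  have hB : ∀ i j, 0 ≤ B i j := by
    intro i j
    rw [hBentry]
    by_cases h : i = j
    · subst h; simp; linarith [hs0 i]
    · simp [h]; exact hZ i j h
  have hBoff : ∀ i j, i ≠ j → B i j = - A i j := by
    intro i j h
    rw [hBentry]
    simp [h]
  have hirrB : IrredB B := by
    intro α h1 h2
    obtain ⟨i, hi, j, hj, hij⟩ := hirr α h1 h2
    have hne : i ≠ j := by
      rintro rfl
      rw [Finset.mem_compl] at hj
      exact hj hi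
    exact ⟨i, hi, j, hj, by rw [hBoff i j hne]; simpa using hij⟩
  -- Perron root for B and for Bᵀ
  obtain ⟨ρ, hρ0, hρmem, hle, u, hupos, hueig, huniq⟩ := perron_B hn' B hB hirrB
  have hBT : ∀ i j, 0 ≤ Bᵀ i j := fun i j => hB j i
  obtain ⟨ρ', hρ'0, hρ'mem, hle', q, hqpos, hqeig, hquniq⟩ :=
    perron_B hn' Bᵀ hBT (irredB_transpose hirrB)
  have hmapT : Bᵀ.map Complex.ofReal = (B.map Complex.ofReal)ᵀ := rfl
  have hspecT : spectrum ℂ (Bᵀ.map Complex.ofReal) = spectrum ℂ (B.map Complex.ofReal) := by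
    rw [hmapT, spectrum_transpose]
  have hρ'ρ : ρ' = ρ := by
    have h1 : ρ' ≤ ρ := by
      have := hle (ρ' : ℂ) (by rw [← hspecT]; exact hρ'mem)
      rwa [Complex.norm_real, Real.norm_of_nonneg hρ'0] at this
    have h2 : ρ ≤ ρ' := by
      have := hle' (ρ : ℂ) (by rw [hspecT]; exact hρmem)
      rwa [Complex.norm_real, Real.norm_of_nonneg hρ0] at this
    linarith
  rw [hρ'ρ] at hqeig hquniq
  set r : ℝ := s0 - ρ with hrdef
  -- eigen equations for A
  have hBmul : ∀ v : Fin n → ℝ, B *ᵥ v = s0 • v - A *ᵥ v := by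
    intro v
    rw [hBdef, Matrix.sub_mulVec, Matrix.smul_mulVec, Matrix.one_mulVec]
  have hBTdef : Bᵀ = s0 • (1 : Matrix (Fin n) (Fin n) ℝ) - Aᵀ := by
    rw [hBdef, Matrix.transpose_sub, Matrix.transpose_smul, Matrix.transpose_one]
  have hBTmul : ∀ v : Fin n → ℝ, Bᵀ *ᵥ v = s0 • v - Aᵀ *ᵥ v := by
    intro v
    rw [hBTdef, Matrix.sub_mulVec, Matrix.smul_mulVec, Matrix.one_mulVec]
  have hAeqB : ∀ v : Fin n → ℝ, (A *ᵥ v = r • v ↔ B *ᵥ v = ρ • v) := by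
    intro v
    have h0 := hBmul v
    constructor
    · intro h
      rw [h0, h]
      funext i
      simp only [Pi.smul_apply, Pi.sub_apply, smul_eq_mul, hrdef]
      ring
    · intro h
      have h3 : s0 • v - A *ᵥ v = ρ • v := by rw [← h0]; exact h
      funext i
      have h4 := congrFun h3 i
      simp only [Pi.smul_apply, Pi.sub_apply, smul_eq_mul] at h4 ⊢
      rw [hrdef]
      linarith
  have hATeqB : ∀ v : Fin n → ℝ, (Aᵀ *ᵥ v = r • v ↔ Bᵀ *ᵥ v = ρ • v) := by
    intro v
    have h0 := hBTmul v
    constructor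
    · intro h
      rw [h0, h]
      funext i
      simp only [Pi.smul_apply, Pi.sub_apply, smul_eq_mul, hrdef]
      ring
    · intro h
      have h3 : s0 • v - Aᵀ *ᵥ v = ρ • v := by rw [← h0]; exact h
      funext i
      have h4 := congrFun h3 i
      simp only [Pi.smul_apply, Pi.sub_apply, smul_eq_mul] at h4 ⊢
      rw [hrdef]
      linarith
  have hAu : A *ᵥ u = r • u := (hAeqB u).2 hueig
  have hATq : Aᵀ *ᵥ q = r • q := (hATeqB q).2 hqeig
  -- complex spectrum relation
  set Ac := A.map Complex.ofReal with hAcdef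
  have hBcA : B.map Complex.ofReal = (s0 : ℂ) • 1 - Ac := by
    ext i j
    rw [hAcdef]
    simp only [Matrix.map_apply, Matrix.sub_apply, Matrix.smul_apply, Matrix.one_apply,
      hBentry i j]
    by_cases h : i = j <;> simp [h] <;> push_cast <;> ring
  have hspec_shift : ∀ μ : ℂ, μ ∈ spectrum ℂ Ac ↔
      ((s0 : ℂ) - μ) ∈ spectrum ℂ (B.map Complex.ofReal) := by
    intro μ
    rw [hBcA]
    exact mem_spec_shift Ac (s0 : ℂ) μ
  refine ⟨r, ?_, ?_, ?_, ⟨u, hupos, hAu⟩, ?_⟩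
  · -- r is an eigenvalue of A
    rw [hspec_shift]
    have : (s0 : ℂ) - (r : ℂ) = (ρ : ℂ) := by
      rw [hrdef]
      push_cast
      ring
    rw [this]
    exact hρmem
  · -- dominance
    intro μ hμ hμr
    set ν : ℂ := (s0 : ℂ) - μ with hνdef
    have hν : ν ∈ spectrum ℂ (B.map Complex.ofReal) := (hspec_shift μ).1 hμ
    have hνle : ‖ν‖ ≤ ρ := hle ν hν
    have hνre : ν.re ≤ ‖ν‖ := Complex.re_le_norm ν
    rcases lt_or_eq_of_le (le_trans hνre hνle) with h | h
    · -- ν.re < ρ gives r < μ.re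
      have : ν.re = s0 - μ.re := by rw [hνdef]; simp
      rw [this] at h
      rw [hrdef]
      linarith
    · -- ν.re = ρ forces ν = ρ hence μ = r, contradiction
      exfalso
      have him : ν.im = 0 := by
        have h1 : ‖ν‖ ^ 2 = ν.re * ν.re + ν.im * ν.im := by
          rw [Complex.sq_norm, Complex.normSq_apply]
        have h2 : ‖ν‖ ≤ ρ := hνle
        have h3 : ν.im * ν.im ≤ 0 := by nlinarith [norm_nonneg ν]
        nlinarith
      have hνeq : ν = (ρ : ℂ) := by
        apply Complex.ext
        · rw [h]; simp
        · rw [him]; simp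
      apply hμr
      have : μ = (s0 : ℂ) - ν := by rw [hνdef]; ring
      rw [this, hνeq, hrdef]
      push_cast
      ring
  · -- simplicity
    set Mr : Matrix (Fin n) (Fin n) ℝ := r • 1 - A with hMrdef
    have hMru : Mr *ᵥ u = 0 := by
      rw [hMrdef, Matrix.sub_mulVec, Matrix.smul_mulVec, Matrix.one_mulVec, hAu, sub_self]
    have hMrq : Mrᵀ *ᵥ q = 0 := by
      rw [hMrdef, Matrix.transpose_sub, Matrix.transpose_smul, Matrix.transpose_one,
        Matrix.sub_mulVec, Matrix.smul_mulVec, Matrix.one_mulVec, hATq, sub_self]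
    have hker : ∀ v, Mr *ᵥ v = 0 → ∃ c : ℝ, v = c • u := by
      intro v hv
      apply huniq
      rw [← hAeqB]
      rw [hMrdef, Matrix.sub_mulVec, Matrix.smul_mulVec, Matrix.one_mulVec] at hv
      funext i
      have := congrFun hv i
      simp only [Pi.sub_apply, Pi.zero_apply, sub_eq_zero] at this
      exact this.symm
    have hkerT : ∀ v, Mrᵀ *ᵥ v = 0 → ∃ c : ℝ, v = c • q := by
      intro v hv
      apply hquniq
      rw [← hATeqB]
      rw [hMrdef, Matrix.transpose_sub, Matrix.transpose_smul, Matrix.transpose_one,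
        Matrix.sub_mulVec, Matrix.smul_mulVec, Matrix.one_mulVec] at hv
      funext i
      have := congrFun hv i
      simp only [Pi.sub_apply, Pi.zero_apply, sub_eq_zero] at this
      exact this.symm
    have htr : ∑ j, Mr.adjugate j j ≠ 0 :=
      adjugate_trace_ne_zero hn' Mr u q hupos hqpos hMru hMrq hker hkerT
    have hune : u ≠ 0 := by
      intro h
      have := congrFun h ⟨0, hn'⟩
      exact absurd this (ne_of_gt (hupos ⟨0, hn'⟩))
    have hdet : Mr.det = 0 := Matrix.exists_mulVec_eq_zero_iff.1 ⟨u, hune, hMru⟩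
    have heval : A.charpoly.eval r = 0 := by rw [eval_charpoly']; exact hdet
    have hderiv : (derivative A.charpoly).eval r ≠ 0 := by
      rw [deriv_charpoly_eval]
      exact htr
    -- pass to ℂ
    have hcp : Ac.charpoly = A.charpoly.map Complex.ofRealHom := by
      rw [hAcdef]
      exact Matrix.charpoly_map A Complex.ofRealHom
    apply rootMultiplicity_eq_one
    · rw [hcp]
      exact (Polynomial.Monic.map _ (Matrix.charpoly_monic A)).ne_zero
    · rw [hcp, Polynomial.eval_map]
      have : (r : ℂ) = Complex.ofRealHom r := rfl
      rw [this, Polynomial.eval₂_at_apply, heval]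
      simp
    · rw [hcp, Polynomial.derivative_map, Polynomial.eval_map]
      have : (r : ℂ) = Complex.ofRealHom r := rfl
      rw [this, Polynomial.eval₂_at_apply]
      simpa using hderiv
  · -- uniqueness of eigenvectors
    intro v w hv hw hveig hweig
    obtain ⟨cv, hcv⟩ := huniq v ((hAeqB v).1 hveig)
    obtain ⟨cw, hcw⟩ := huniq w ((hAeqB w).1 hweig)
    have hcvne : cv ≠ 0 := by
      rintro rfl
      rw [zero_smul] at hcv
      exact hv hcv
    refine ⟨cw / cv, ?_⟩
    rw [hcw, hcv, smul_smul, div_mul_cancel₀ _ hcvne]
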